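/- The set of medians of a probability measure μ on ℝ (points m with μ((-∞,m]) ≥ 1/2 and μ([m,∞)) ≥ 1/2) equals the intersection of all compact intervals [a,b] with μ([a,b]) > 1/2. -/

import Mathlib

open MeasureTheory
open scoped ENNReal

lemma Ioi_eq_iUnion_Icc (m : ℝ) :
    Set.Ioi m = ⋃ n : ℕ, Set.Icc (m + 1/(n+1)) (m + n) := by
  ext x
  simp only [Set.mem_Ioi, Set.mem_iUnion, Set.mem_Icc]
  constructor
  · intro hx
    obtain ⟨n, hn⟩ := exists_nat_gt (max (1/(x-m)) (x - m))
    refine ⟨n, ?_, ?_⟩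
    · have h1 : 1/(x-m) < (n:ℝ) + 1 :=
        lt_of_le_of_lt (le_max_left _ _) (by linarith)
      have hxm : 0 < x - m := sub_pos.mpr hx
      have : 1/((n:ℝ)+1) < x - m := by
        rw [div_lt_iff₀ (by positivity)]
        rw [div_lt_iff₀ hxm] at h1
        linarith [mul_comm (x - m) ((n:ℝ)+1)]
      linarith
    · have := lt_of_le_of_lt (le_max_right (1/(x-m)) (x-m)) hn
      linarith
  · rintro ⟨n, h1, _⟩
    have : (0:ℝ) < 1/((n:ℝ)+1) := by positivity
    linarith

lemma Iio_eq_iUnion_Icc (m : ℝ) :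
    Set.Iio m = ⋃ n : ℕ, Set.Icc (m - n) (m - 1/(n+1)) := by
  ext x
  simp only [Set.mem_Iio, Set.mem_iUnion, Set.mem_Icc]
  constructor
  · intro hx
    obtain ⟨n, hn⟩ := exists_nat_gt (max (1/(m-x)) (m - x))
    refine ⟨n, ?_, ?_⟩
    · have := lt_of_le_of_lt (le_max_right (1/(m-x)) (m-x)) hn
      linarith
    · have h1 : 1/(m-x) < (n:ℝ) + 1 :=
        lt_of_le_of_lt (le_max_left _ _) (by linarith)
      have hxm : 0 < m - x := sub_pos.mpr hx
      have : 1/((n:ℝ)+1) < m - x := by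
        rw [div_lt_iff₀ (by positivity)]
        rw [div_lt_iff₀ hxm] at h1
        linarith [mul_comm (x - m) ((n:ℝ)+1)]
      linarith
  · rintro ⟨n, _, h2⟩
    have : (0:ℝ) < 1/((n:ℝ)+1) := by positivity
    linarith

/-- The set of medians of a probability measure on ℝ equals the intersection of all
compact intervals `[a,b]` with `μ [a,b] > 1/2`. -/
theorem median_set_eq_iInter_intervals (μ : Measure ℝ) [IsProbabilityMeasure μ] :
    {m : ℝ | 1/2 ≤ μ (Set.Iic m) ∧ 1/2 ≤ μ (Set.Ici m)} =
      ⋂₀ {I : Set ℝ | ∃ a b : ℝ, I = Set.Icc a b ∧ 1/2 < μ I} := by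
  have half_add : (1/2 : ℝ≥0∞) + 1/2 = 1 := ENNReal.add_halves 1
  ext m
  simp only [Set.mem_setOf_eq, Set.mem_sInter]
  constructor
  · rintro ⟨h1, h2⟩ I ⟨a, b, rfl, hI⟩
    by_contra hm
    simp only [Set.mem_Icc, not_and_or, not_le] at hm
    rcases hm with hm | hm
    · -- m < a : Icc a b ⊆ Ioi m
      have hsub : Set.Icc a b ⊆ Set.Ioi m := fun x hx => lt_of_lt_of_le hm hx.1
      have hcompl : μ (Set.Ioi m) + μ (Set.Iic m) = 1 := by
        rw [← measure_union ((Set.Iic_disjoint_Ioi le_rfl).symm) measurableSet_Iic,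
          Set.union_comm _ _, Set.Iic_union_Ioi, measure_univ]
      have : μ (Set.Icc a b) ≤ μ (Set.Ioi m) := measure_mono hsub
      have hlt : 1/2 < μ (Set.Ioi m) := lt_of_lt_of_le hI this
      have : (1:ℝ≥0∞) < 1 := by
        calc (1:ℝ≥0∞) = 1/2 + 1/2 := half_add.symm
        _ < μ (Set.Ioi m) + μ (Set.Iic m) := by
            exact ENNReal.add_lt_add_of_lt_of_le (by simp) hlt h1
        _ = 1 := hcompl
      exact absurd this (lt_irrefl _)
    · -- b < m : Icc a b ⊆ Iio m
      have hsub : Set.Icc a b ⊆ Set.Iio m := fun x hx => lt_of_le_of_lt hx.2 hm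
      have hcompl : μ (Set.Iio m) + μ (Set.Ici m) = 1 := by
        rw [← measure_union ((Set.Iio_disjoint_Ici le_rfl)) measurableSet_Ici,
          Set.Iio_union_Ici, measure_univ]
      have hlt : 1/2 < μ (Set.Iio m) := lt_of_lt_of_le hI (measure_mono hsub)
      have : (1:ℝ≥0∞) < 1 := by
        calc (1:ℝ≥0∞) = 1/2 + 1/2 := half_add.symm
        _ < μ (Set.Iio m) + μ (Set.Ici m) := by
            exact ENNReal.add_lt_add_of_lt_of_le (by simp) hlt h2
        _ = 1 := hcompl
      exact absurd this (lt_irrefl _)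
  · intro hm
    constructor
    · by_contra h1
      push_neg at h1
      have hcompl : μ (Set.Iic m) + μ (Set.Ioi m) = 1 := by
        rw [← measure_union (Set.Iic_disjoint_Ioi le_rfl) measurableSet_Ioi,
          Set.Iic_union_Ioi, measure_univ]
      have hIoi : 1/2 < μ (Set.Ioi m) := by
        by_contra h2
        push_neg at h2
        have : μ (Set.Iic m) + μ (Set.Ioi m) < 1 := by
          calc μ (Set.Iic m) + μ (Set.Ioi m) < 1/2 + 1/2 :=
            ENNReal.add_lt_add_of_lt_of_le (by simp) h1 h2
          _ = 1 := half_add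
        exact absurd hcompl (ne_of_lt this)
      rw [Ioi_eq_iUnion_Icc m] at hIoi
      have hmono : Monotone (fun n : ℕ => Set.Icc (m + 1/((n:ℝ)+1)) (m + n)) := by
        intro n k hnk
        apply Set.Icc_subset_Icc
        · have : 1/((k:ℝ)+1) ≤ 1/((n:ℝ)+1) := by
            apply one_div_le_one_div_of_le (by positivity)
            have hk : (n:ℝ) ≤ k := Nat.cast_le.mpr hnk
            linarith
          linarith
        · have : (n:ℝ) ≤ k := Nat.cast_le.mpr hnk
          linarith
      rw [hmono.directed_le.measure_iUnion] at hIoi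
      rw [lt_iSup_iff] at hIoi
      obtain ⟨n, hn⟩ := hIoi
      have := hm _ ⟨m + 1/((n:ℝ)+1), m + n, rfl, hn⟩
      have hpos : (0:ℝ) < 1/((n:ℝ)+1) := by positivity
      have := this.1
      linarith
    · by_contra h2
      push_neg at h2
      have hcompl : μ (Set.Ici m) + μ (Set.Iio m) = 1 := by
        rw [← measure_union ((Set.Iio_disjoint_Ici le_rfl).symm) measurableSet_Iio,
          Set.union_comm _ _, Set.Iio_union_Ici, measure_univ]
      have hIio : 1/2 < μ (Set.Iio m) := by
        by_contra h3
        push_neg at h3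
        have : μ (Set.Ici m) + μ (Set.Iio m) < 1 := by
          calc μ (Set.Ici m) + μ (Set.Iio m) < 1/2 + 1/2 :=
            ENNReal.add_lt_add_of_lt_of_le (by simp) h2 h3
          _ = 1 := half_add
        exact absurd hcompl (ne_of_lt this)
      rw [Iio_eq_iUnion_Icc m] at hIio
      have hmono : Monotone (fun n : ℕ => Set.Icc (m - (n:ℝ)) (m - 1/((n:ℝ)+1))) := by
        intro n k hnk
        apply Set.Icc_subset_Icc
        · have : (n:ℝ) ≤ k := Nat.cast_le.mpr hnk
          linarith
        · have : 1/((k:ℝ)+1) ≤ 1/((n:ℝ)+1) := by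
            apply one_div_le_one_div_of_le (by positivity)
            have hk : (n:ℝ) ≤ k := Nat.cast_le.mpr hnk
            linarith
          linarith
      rw [hmono.directed_le.measure_iUnion] at hIio
      rw [lt_iSup_iff] at hIio
      obtain ⟨n, hn⟩ := hIio
      have := hm _ ⟨m - (n:ℝ), m - 1/((n:ℝ)+1), rfl, hn⟩
      have hpos : (0:ℝ) < 1/((n:ℝ)+1) := by positivity
      have := this.2
      linarith
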